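/- Let A, S, T be finite sets of points in ℝ × ℝ, all of whose points have both coordinates in the interval [−1, 1]. Let δ ≥ 0, let γ : S → T be a bijection such that for every s ∈ S both |s₁ − γ(s)₁| ≤ δ and |s₂ − γ(s)₂| ≤ δ, and let σ : A → S be an injection. Then the injection γ ∘ σ : A → T satisfies Σ_{a ∈ A} ((a₁ − (γ∘σ)(a)₁)² + (a₂ − (γ∘σ)(a)₂)²) ≤ Σ_{a ∈ A} ((a₁ − σ(a)₁)² + (a₂ − σ(a)₂)²) + |A|·(8δ + 2δ²). -/
import Mathlib

lemma coord_bound (x e δ : ℝ) (hx : |x| ≤ 2) (he : |e| ≤ δ) :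
    (x - e) ^ 2 ≤ x ^ 2 + 4 * δ + δ ^ 2 := by
  have h1 := abs_le.mp hx
  have h2 := abs_le.mp he
  nlinarith [sq_nonneg (x - e), sq_nonneg (x + e)]

/-- Combinatorial core of the bounded increase of the topological term: composing an
injection `σ : A → S` with a `δ`-perturbation bijection `γ : S → T` increases the
matching cost by at most `|A|·(8δ + 2δ²)`, when all points lie in `[-1,1]²`. -/
theorem matching_cost_composition_bound
    (A S T : Finset (ℝ × ℝ))
    (hA : ∀ a ∈ A, a.1 ∈ Set.Icc (-1 : ℝ) 1 ∧ a.2 ∈ Set.Icc (-1 : ℝ) 1)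
    (hS : ∀ s ∈ S, s.1 ∈ Set.Icc (-1 : ℝ) 1 ∧ s.2 ∈ Set.Icc (-1 : ℝ) 1)
    (hT : ∀ t ∈ T, t.1 ∈ Set.Icc (-1 : ℝ) 1 ∧ t.2 ∈ Set.Icc (-1 : ℝ) 1)
    (δ : ℝ) (hδ : 0 ≤ δ)
    (γ : ℝ × ℝ → ℝ × ℝ) (hγ : Set.BijOn γ ↑S ↑T)
    (hγδ : ∀ s ∈ S, |s.1 - (γ s).1| ≤ δ ∧ |s.2 - (γ s).2| ≤ δ)
    (σ : ℝ × ℝ → ℝ × ℝ) (hσ : Set.MapsTo σ ↑A ↑S) (hσi : Set.InjOn σ ↑A) :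
    ∑ a ∈ A, ((a.1 - (γ (σ a)).1) ^ 2 + (a.2 - (γ (σ a)).2) ^ 2) ≤
      (∑ a ∈ A, ((a.1 - (σ a).1) ^ 2 + (a.2 - (σ a).2) ^ 2)) +
        (A.card : ℝ) * (8 * δ + 2 * δ ^ 2) := by
  have key : ∀ a ∈ A, (a.1 - (γ (σ a)).1) ^ 2 + (a.2 - (γ (σ a)).2) ^ 2 ≤
      ((a.1 - (σ a).1) ^ 2 + (a.2 - (σ a).2) ^ 2) + (8 * δ + 2 * δ ^ 2) := by
    intro a ha
    have haA := hA a ha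
    have hsS : σ a ∈ S := hσ ha
    have hsB := hS (σ a) hsS
    have hd := hγδ (σ a) hsS
    have h1 : |a.1 - (σ a).1| ≤ 2 := by
      rw [abs_le]; constructor <;> [skip; skip] <;>
        · have := haA.1; have := hsB.1; simp [Set.mem_Icc] at *; linarith
    have h2 : |a.2 - (σ a).2| ≤ 2 := by
      rw [abs_le]; constructor <;> [skip; skip] <;>
        · have := haA.2; have := hsB.2; simp [Set.mem_Icc] at *; linarith
    have c1 : (a.1 - (γ (σ a)).1) ^ 2 ≤ (a.1 - (σ a).1) ^ 2 + 4 * δ + δ ^ 2 := by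
      have hd1 : |(γ (σ a)).1 - (σ a).1| ≤ δ := by rw [abs_sub_comm]; exact hd.1
      have := coord_bound (a.1 - (σ a).1) ((γ (σ a)).1 - (σ a).1) δ h1 hd1
      have heq : a.1 - (σ a).1 - ((γ (σ a)).1 - (σ a).1) = a.1 - (γ (σ a)).1 := by ring
      linarith [heq ▸ this]
    have c2 : (a.2 - (γ (σ a)).2) ^ 2 ≤ (a.2 - (σ a).2) ^ 2 + 4 * δ + δ ^ 2 := by
      have hd2 : |(γ (σ a)).2 - (σ a).2| ≤ δ := by rw [abs_sub_comm]; exact hd.2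
      have := coord_bound (a.2 - (σ a).2) ((γ (σ a)).2 - (σ a).2) δ h2 hd2
      have heq : a.2 - (σ a).2 - ((γ (σ a)).2 - (σ a).2) = a.2 - (γ (σ a)).2 := by ring
      linarith [heq ▸ this]
    linarith
  calc ∑ a ∈ A, ((a.1 - (γ (σ a)).1) ^ 2 + (a.2 - (γ (σ a)).2) ^ 2)
      ≤ ∑ a ∈ A, (((a.1 - (σ a).1) ^ 2 + (a.2 - (σ a).2) ^ 2) + (8 * δ + 2 * δ ^ 2)) :=
        Finset.sum_le_sum key
    _ = (∑ a ∈ A, ((a.1 - (σ a).1) ^ 2 + (a.2 - (σ a).2) ^ 2)) +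
        (A.card : ℝ) * (8 * δ + 2 * δ ^ 2) := by
        rw [Finset.sum_add_distrib, Finset.sum_const, nsmul_eq_mul]
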